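/- Representer theorem: Let F be a reproducing kernel Hilbert space over a set X with reproducing kernel k, let z_1,...,z_N be points in X, let L : ℝ^N → ℝ be any loss functional of the values f(z_1),...,f(z_N), let Ω : [0,∞) → ℝ be strictly increasing, and let λ > 0. Then for any f ∈ F there exists a function h of the form h = ∑_{i=1}^N α_i k(·, z_i) with α_i ∈ ℝ such that L(h(z_1),...,h(z_N)) + λ Ω(‖h‖²) ≤ L(f(z_1),...,f(z_N)) + λ Ω(‖f‖²). In particular, any minimizer of the regularized risk can be taken in the span of {k(·, z_i)}. -/

import Mathlib

/-- Representer theorem: in an RKHS `F` over `X` with kernel sections `K x` and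
reproducing property `ev f x = ⟪f, K x⟫`, for any `f` there is `h = ∑ αᵢ • K (z i)`
whose regularized risk is at most that of `f`. -/
theorem representer_theorem
    {X F : Type*} [NormedAddCommGroup F] [InnerProductSpace ℝ F] [CompleteSpace F]
    (ev : F → X → ℝ) (K : X → F)
    (hrep : ∀ (f : F) (x : X), ev f x = inner ℝ f (K x))
    (N : ℕ) (z : Fin N → X) (L : (Fin N → ℝ) → ℝ)
    (Ω : ℝ → ℝ) (hΩ : StrictMonoOn Ω (Set.Ici 0))
    (lam : ℝ) (hlam : 0 < lam) (f : F) :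
    ∃ (α : Fin N → ℝ) (h : F), h = ∑ i, α i • K (z i) ∧
      L (fun i => ev h (z i)) + lam * Ω (‖h‖ ^ 2)
        ≤ L (fun i => ev f (z i)) + lam * Ω (‖f‖ ^ 2) := by
  set S : Submodule ℝ F := Submodule.span ℝ (Set.range fun i => K (z i)) with hS
  haveI : FiniteDimensional ℝ S :=
    FiniteDimensional.span_of_finite ℝ (Set.finite_range _)
  haveI : CompleteSpace S := FiniteDimensional.complete ℝ S
  set h : F := (Submodule.orthogonalProjectionOnto S f : F) with hh
  -- h is in the span, so a linear combination
  have hmem : h ∈ S := (Submodule.orthogonalProjectionOnto S f).2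
  obtain ⟨α, hα⟩ := (Submodule.mem_span_range_iff_exists_fun ℝ).1 hmem
  refine ⟨α, h, hα.symm, ?_⟩
  -- evaluations agree
  have hperp : f - h ∈ Sᗮ := S.sub_starProjection_mem_orthogonal f
  have hev : ∀ i, ev h (z i) = ev f (z i) := by
    intro i
    have hKz : K (z i) ∈ S := Submodule.subset_span ⟨i, rfl⟩
    have := hperp (K (z i)) hKz
    rw [hrep, hrep]
    have : (inner ℝ (f - h) (K (z i)) : ℝ) = 0 := by
      rw [real_inner_comm]; exact this
    rw [inner_sub_left] at this
    linarith
  have heq : (fun i => ev h (z i)) = fun i => ev f (z i) := funext hev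
  rw [heq]
  -- norm bound
  have hnorm : ‖h‖ ≤ ‖f‖ := by
    calc ‖h‖ = ‖Submodule.orthogonalProjectionOnto S f‖ := rfl
    _ ≤ ‖f‖ := by
      have := (Submodule.orthogonalProjectionOnto S).le_opNorm f
      calc ‖Submodule.orthogonalProjectionOnto S f‖ ≤ ‖Submodule.orthogonalProjectionOnto S‖ * ‖f‖ := this
        _ ≤ 1 * ‖f‖ := by
            exact mul_le_mul_of_nonneg_right (Submodule.orthogonalProjectionOnto_norm_le S) (norm_nonneg f)
        _ = ‖f‖ := one_mul _
  have hsq : ‖h‖ ^ 2 ≤ ‖f‖ ^ 2 := pow_le_pow_left₀ (norm_nonneg h) hnorm 2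
  have hΩle : Ω (‖h‖ ^ 2) ≤ Ω (‖f‖ ^ 2) :=
    hΩ.monotoneOn (Set.mem_Ici.2 (by positivity)) (Set.mem_Ici.2 (by positivity)) hsq
  nlinarith
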